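/- The joint tensor algebra T(U,V) equipped with the square product a □ b = Σ_{(a),(b)} (a₍₁₎ | b₍₁₎) a₍₂₎·b₍₂₎ is a unital associative algebra: (a □ b) □ c = a □ (b □ c) for all a, b, c ∈ T(U,V), and the ordinary unit 1⊗1 satisfies (1⊗1) □ a = a □ (1⊗1) = a. -/

import Mathlib

open TensorProduct

noncomputable section
set_option maxHeartbeats 1000000
set_option synthInstance.maxHeartbeats 400000

variable (K : Type) [Field K] [CharZero K]
variable (U V : Type) [AddCommGroup U] [Module K U] [AddCommGroup V] [Module K V]

/-- The comultiplication of the tensor algebra, the algebra homomorphism with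
`Δ(x) = 1 ⊗ x + x ⊗ 1` for `x ∈ U`. -/
def TAcomul : TensorAlgebra K U →ₐ[K] TensorAlgebra K U ⊗[K] TensorAlgebra K U :=
  TensorAlgebra.lift K
    ((TensorProduct.mk K (TensorAlgebra K U) (TensorAlgebra K U) 1
      + (TensorProduct.mk K (TensorAlgebra K U) (TensorAlgebra K U)).flip 1) ∘ₗ TensorAlgebra.ι K)

/-- The joint tensor algebra `T(U,V) = T(U) ⊗ T(V)`. -/
abbrev JT := TensorAlgebra K U ⊗[K] TensorAlgebra K V

/-- The comultiplication of the joint tensor algebra (tensor product Hopf structure). -/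
def JTcomul : JT K U V →ₗ[K] JT K U V ⊗[K] JT K U V :=
  (TensorProduct.tensorTensorTensorComm K (TensorAlgebra K U) (TensorAlgebra K U)
      (TensorAlgebra K V) (TensorAlgebra K V)).toLinearMap ∘ₗ
    TensorProduct.map (TAcomul K U).toLinearMap (TAcomul K V).toLinearMap

/-- `a ↦ a ⊗ 1 : T(U) → T(U,V)`. -/
def inclU : TensorAlgebra K U →ₗ[K] JT K U V :=
  (TensorProduct.mk K (TensorAlgebra K U) (TensorAlgebra K V)).flip 1

/-- `b ↦ 1 ⊗ b : T(V) → T(U,V)`. -/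
def inclV : TensorAlgebra K V →ₗ[K] JT K U V :=
  TensorProduct.mk K (TensorAlgebra K U) (TensorAlgebra K V) 1

variable (B : U →ₗ[K] V →ₗ[K] K)

/-- A Laplace pairing on the joint tensor algebra `T(U,V)`, compatible with the duality `B`:
a symmetric bilinear form satisfying `(a | bc) = Σ (a₍₁₎ | b) (a₍₂₎ | c)` together with the
compatibility conditions on generators. -/
structure IsLaplacePairing (Lp : JT K U V →ₗ[K] JT K U V →ₗ[K] K) : Prop where
  symm : ∀ a b, Lp a b = Lp b a
  split : ∀ a b c, Lp a (b * c)
    = TensorProduct.lift ((LinearMap.mul K K).compl₁₂ (Lp.flip b) (Lp.flip c)) (JTcomul K U V a)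
  unit_unit : Lp 1 1 = 1
  vu : ∀ (x : U) (y : V),
    Lp (inclV K U V (TensorAlgebra.ι K y)) (inclU K U V (TensorAlgebra.ι K x)) = B x y
  uv : ∀ (x : U) (y : V),
    Lp (inclU K U V (TensorAlgebra.ι K x)) (inclV K U V (TensorAlgebra.ι K y)) = B x y
  uu : ∀ x₁ x₂ : U,
    Lp (inclU K U V (TensorAlgebra.ι K x₁)) (inclU K U V (TensorAlgebra.ι K x₂)) = 0
  vv : ∀ y₁ y₂ : V,
    Lp (inclV K U V (TensorAlgebra.ι K y₁)) (inclV K U V (TensorAlgebra.ι K y₂)) = 0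
  u_one : ∀ x : U, Lp (inclU K U V (TensorAlgebra.ι K x)) 1 = 0
  one_u : ∀ x : U, Lp 1 (inclU K U V (TensorAlgebra.ι K x)) = 0
  one_v : ∀ y : V, Lp 1 (inclV K U V (TensorAlgebra.ι K y)) = 0
  v_one : ∀ y : V, Lp (inclV K U V (TensorAlgebra.ι K y)) 1 = 0

/-- Auxiliary map sending `(a₁ ⊗ a₂) ⊗ (b₁ ⊗ b₂)` to `(a₁ | b₁) a₂ · b₂`. -/
def sqAux (Lp : JT K U V →ₗ[K] JT K U V →ₗ[K] K) :
    (JT K U V ⊗[K] JT K U V) ⊗[K] (JT K U V ⊗[K] JT K U V) →ₗ[K] JT K U V :=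
  (TensorProduct.lid K (JT K U V)).toLinearMap ∘ₗ
    TensorProduct.map (TensorProduct.lift Lp)
      (TensorProduct.lift (LinearMap.mul K (JT K U V))) ∘ₗ
    (TensorProduct.tensorTensorTensorComm K (JT K U V) (JT K U V)
      (JT K U V) (JT K U V)).toLinearMap

/-- The square product `a □ b = Σ (a₍₁₎ | b₍₁₎) a₍₂₎ · b₍₂₎` on the joint tensor algebra. -/
def sqProd (Lp : JT K U V →ₗ[K] JT K U V →ₗ[K] K) :
    JT K U V →ₗ[K] JT K U V →ₗ[K] JT K U V :=
  (TensorProduct.curry (sqAux K U V Lp)).compl₁₂ (JTcomul K U V) (JTcomul K U V)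

theorem ttt_bridge {A B C D : Type} [Semiring A] [Semiring B] [Semiring C] [Semiring D] [Algebra K A] [Algebra K B]
    [Algebra K C] [Algebra K D] (z : (A ⊗[K] B) ⊗[K] (C ⊗[K] D)) :
    Algebra.TensorProduct.tensorTensorTensorComm K K K K A B C D z
      = TensorProduct.tensorTensorTensorComm K A B C D z :=
  LinearEquiv.congr_fun Algebra.TensorProduct.tensorTensorTensorComm_toLinearEquiv z

theorem algMap_bridge {A B C D : Type} [Semiring A] [Semiring B] [Semiring C] [Semiring D] [Algebra K A]
    [Algebra K B] [Algebra K C] [Algebra K D] (f : A →ₐ[K] B) (g : C →ₐ[K] D) (z : A ⊗[K] C) :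
    Algebra.TensorProduct.map f g z = TensorProduct.map f.toLinearMap g.toLinearMap z := by
  induction z with
  | zero => simp
  | tmul a c => simp
  | add x y hx hy => rw [map_add, map_add, hx, hy]

def JTcomulA : JT K U V →ₐ[K] JT K U V ⊗[K] JT K U V :=
  (Algebra.TensorProduct.tensorTensorTensorComm K K K K _ _ _ _).toAlgHom.comp
    (Algebra.TensorProduct.map (TAcomul K U) (TAcomul K V))

theorem JTcomul_eq (a : JT K U V) : JTcomul K U V a = JTcomulA K U V a := by
  rw [JTcomul, JTcomulA]
  simp only [AlgHom.coe_comp, Function.comp_apply, AlgEquiv.toAlgHom_eq_coe, AlgEquiv.coe_algHom,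
    LinearMap.coe_comp, LinearEquiv.coe_coe]
  rw [algMap_bridge]; exact (ttt_bridge K _).symm

theorem TAcomul_ι (x : U) : TAcomul K U (TensorAlgebra.ι K x)
    = 1 ⊗ₜ TensorAlgebra.ι K x + TensorAlgebra.ι K x ⊗ₜ 1 := by
  simp [TAcomul]

theorem JTcomulA_genU (x : U) :
    JTcomulA K U V ((TensorAlgebra.ι K x) ⊗ₜ (1 : TensorAlgebra K V))
      = 1 ⊗ₜ ((TensorAlgebra.ι K x) ⊗ₜ (1 : TensorAlgebra K V))
        + ((TensorAlgebra.ι K x) ⊗ₜ (1 : TensorAlgebra K V)) ⊗ₜ 1 := by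
  rw [JTcomulA]
  simp only [AlgHom.coe_comp, Function.comp_apply, AlgEquiv.toAlgHom_eq_coe, AlgEquiv.coe_algHom,
    Algebra.TensorProduct.map_tmul, map_one, TAcomul_ι, ttt_bridge]
  rw [add_tmul, map_add]
  simp [Algebra.TensorProduct.one_def, tensorTensorTensorComm_tmul]

theorem JTcomulA_genV (y : V) :
    JTcomulA K U V ((1 : TensorAlgebra K U) ⊗ₜ (TensorAlgebra.ι K y))
      = 1 ⊗ₜ ((1 : TensorAlgebra K U) ⊗ₜ (TensorAlgebra.ι K y))
        + ((1 : TensorAlgebra K U) ⊗ₜ (TensorAlgebra.ι K y)) ⊗ₜ 1 := by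
  rw [JTcomulA]
  simp only [AlgHom.coe_comp, Function.comp_apply, AlgEquiv.toAlgHom_eq_coe, AlgEquiv.coe_algHom,
    Algebra.TensorProduct.map_tmul, map_one, TAcomul_ι, ttt_bridge]
  rw [tmul_add, map_add]
  simp [Algebra.TensorProduct.one_def, tensorTensorTensorComm_tmul]

theorem comm_bridge {A B : Type} [Semiring A] [Semiring B] [Algebra K A] [Algebra K B] (z : A ⊗[K] B) :
    Algebra.TensorProduct.comm K A B z = TensorProduct.comm K A B z :=
  LinearEquiv.congr_fun (Algebra.TensorProduct.comm_toLinearEquiv K A B) z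

theorem assoc_bridge {A B C : Type} [Semiring A] [Semiring B] [Semiring C] [Algebra K A] [Algebra K B] [Algebra K C]
    (z : (A ⊗[K] B) ⊗[K] C) :
    Algebra.TensorProduct.assoc K K K A B C z = TensorProduct.assoc K A B C z :=
  LinearEquiv.congr_fun (Algebra.TensorProduct.assoc_toLinearEquiv K K K A B C) z

theorem lid_bridge {A : Type} [Semiring A] [Algebra K A] (z : K ⊗[K] A) :
    Algebra.TensorProduct.lid K A z = TensorProduct.lid K A z :=
  LinearEquiv.congr_fun (Algebra.TensorProduct.lid_toLinearEquiv K A) z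

def TAcounit (W : Type) [AddCommGroup W] [Module K W] : TensorAlgebra K W →ₐ[K] K :=
  TensorAlgebra.lift K 0

def JTcounit : JT K U V →ₐ[K] K :=
  (Algebra.TensorProduct.lmul' K).comp
    (Algebra.TensorProduct.map (TAcounit K U) (TAcounit K V))

theorem JTcounit_genU (x : U) :
    JTcounit K U V ((TensorAlgebra.ι K x) ⊗ₜ (1 : TensorAlgebra K V)) = 0 := by
  simp [JTcounit, TAcounit]

theorem JTcounit_genV (y : V) :
    JTcounit K U V ((1 : TensorAlgebra K U) ⊗ₜ (TensorAlgebra.ι K y)) = 0 := by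
  simp [JTcounit, TAcounit]

-- cocommutativity
theorem JTcomul_cocomm (a : JT K U V) :
    TensorProduct.comm K _ _ (JTcomul K U V a) = JTcomul K U V a := by
  have halg : (Algebra.TensorProduct.comm K (JT K U V) (JT K U V)).toAlgHom.comp
      (JTcomulA K U V) = JTcomulA K U V := by
    ext x
    · simp [JTcomulA_genU, Algebra.TensorProduct.comm_tmul, add_comm]
    · simp [JTcomulA_genV, Algebra.TensorProduct.comm_tmul, add_comm]
  have h := AlgHom.congr_fun halg a
  simp only [AlgHom.coe_comp, Function.comp_apply, AlgEquiv.toAlgHom_eq_coe,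
    AlgEquiv.coe_algHom] at h
  have hb := comm_bridge K ((JTcomulA K U V) a)
  rw [JTcomul_eq, ← hb]
  exact h

theorem comm_bridge' : True := trivial

theorem JTcomul_eq' : JTcomul K U V = (JTcomulA K U V).toLinearMap :=
  LinearMap.ext (JTcomul_eq K U V)

theorem JTcomul_one : JTcomul K U V 1 = 1 ⊗ₜ 1 := by
  rw [JTcomul_eq, map_one, Algebra.TensorProduct.one_def]

theorem JTcomul_mul (a b : JT K U V) :
    JTcomul K U V (a * b) = JTcomul K U V a * JTcomul K U V b := by
  simp [JTcomul_eq, map_mul]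

theorem JTcounit_one : JTcounit K U V ((1 : TensorAlgebra K U) ⊗ₜ (1 : TensorAlgebra K V)) = 1 := by
  rw [← Algebra.TensorProduct.one_def]; exact map_one _

theorem JTcomulA_one :
    JTcomulA K U V ((1 : TensorAlgebra K U) ⊗ₜ (1 : TensorAlgebra K V))
      = ((1 : TensorAlgebra K U) ⊗ₜ (1 : TensorAlgebra K V))
          ⊗ₜ[K] ((1 : TensorAlgebra K U) ⊗ₜ (1 : TensorAlgebra K V)) := by
  rw [← Algebra.TensorProduct.one_def, map_one, Algebra.TensorProduct.one_def,
    Algebra.TensorProduct.one_def]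

set_option maxHeartbeats 4000000 in
theorem JTcomul_coassoc (a : JT K U V) :
    TensorProduct.map LinearMap.id (JTcomul K U V) (JTcomul K U V a)
      = TensorProduct.assoc K _ _ _
          (TensorProduct.map (JTcomul K U V) LinearMap.id (JTcomul K U V a)) := by
  have halg : (Algebra.TensorProduct.map (AlgHom.id K (JT K U V)) (JTcomulA K U V)).comp
      (JTcomulA K U V)
      = ((Algebra.TensorProduct.assoc K K K (JT K U V) (JT K U V) (JT K U V)).toAlgHom.comp
          ((Algebra.TensorProduct.map (JTcomulA K U V) (AlgHom.id K (JT K U V))).comp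
            (JTcomulA K U V))) := by
    ext x
    · simp [JTcomulA_genU, JTcomulA_one, Algebra.TensorProduct.assoc_tmul,
        Algebra.TensorProduct.one_def, tmul_add, add_tmul]
      abel
    · simp [JTcomulA_genV, JTcomulA_one, Algebra.TensorProduct.assoc_tmul,
        Algebra.TensorProduct.one_def, tmul_add, add_tmul]
      abel
  have h := AlgHom.congr_fun halg a
  simp only [AlgHom.coe_comp, Function.comp_apply, AlgEquiv.toAlgHom_eq_coe,
    AlgEquiv.coe_algHom] at h
  rw [algMap_bridge, algMap_bridge] at h
  simp only [AlgHom.toLinearMap_id] at h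
  rw [show JTcomul K U V a = JTcomulA K U V a from JTcomul_eq K U V a, JTcomul_eq']
  exact h.trans (assoc_bridge K _)

theorem JTcomul_counit (a : JT K U V) :
    TensorProduct.lid K _ (TensorProduct.map (JTcounit K U V).toLinearMap LinearMap.id
      (JTcomul K U V a)) = a := by
  have halg : (Algebra.TensorProduct.map (JTcounit K U V) (AlgHom.id K (JT K U V))).comp
        (JTcomulA K U V) = Algebra.TensorProduct.includeRight := by
    ext x
    · simp [JTcomulA_genU, JTcounit_genU, JTcounit_one, Algebra.TensorProduct.one_def]
    · simp [JTcomulA_genV, JTcounit_genV, JTcounit_one, Algebra.TensorProduct.one_def]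
  have h := AlgHom.congr_fun halg a
  simp only [AlgHom.coe_comp, Function.comp_apply,
    Algebra.TensorProduct.includeRight_apply] at h
  rw [algMap_bridge] at h
  simp only [AlgHom.toLinearMap_id] at h
  rw [show JTcomul K U V a = JTcomulA K U V a from JTcomul_eq K U V a, h]
  simp


variable (Lp : JT K U V →ₗ[K] JT K U V →ₗ[K] K)

theorem sqAux_tmul (x₁ x₂ y₁ y₂ : JT K U V) :
    sqAux K U V Lp ((x₁ ⊗ₜ x₂) ⊗ₜ (y₁ ⊗ₜ y₂)) = Lp x₁ y₁ • (x₂ * y₂) := by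
  simp [sqAux]

theorem sqProd_eq (a b : JT K U V) :
    sqProd K U V Lp a b = sqAux K U V Lp (JTcomul K U V a ⊗ₜ JTcomul K U V b) := rfl

theorem inclU_app (z : TensorAlgebra K U) : inclU K U V z = z ⊗ₜ 1 := rfl
theorem inclV_app (z : TensorAlgebra K V) : inclV K U V z = 1 ⊗ₜ z := rfl

variable {K U V B Lp}

theorem Lp_one_counit (hLp : IsLaplacePairing K U V B Lp) (a : JT K U V) :
    Lp 1 a = JTcounit K U V a := by
  have hmul : ∀ x y : JT K U V, Lp 1 (x * y) = Lp 1 x * Lp 1 y := by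
    intro x y
    rw [hLp.split, JTcomul_one]
    simp
  have hF : AlgHom.ofLinearMap (Lp 1) hLp.unit_unit hmul = JTcounit K U V := by
    ext x
    · simp only [AlgHom.coe_comp, LinearMap.coe_comp, Function.comp_apply,
        AlgHom.toLinearMap_apply, Algebra.TensorProduct.includeLeft_apply,
        AlgHom.restrictScalars_apply, AlgHom.ofLinearMap_apply, JTcounit_genU]
      exact hLp.one_u x
    · simp only [AlgHom.coe_comp, LinearMap.coe_comp, Function.comp_apply,
        AlgHom.toLinearMap_apply, Algebra.TensorProduct.includeRight_apply,
        AlgHom.restrictScalars_apply, AlgHom.ofLinearMap_apply, JTcounit_genV]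
      exact hLp.one_v x
  exact AlgHom.congr_fun hF a

theorem Lp_mul_left (hLp : IsLaplacePairing K U V B Lp) (x y z : JT K U V) :
    Lp (x * y) z
      = TensorProduct.lift ((LinearMap.mul K K).compl₁₂ (Lp x) (Lp y)) (JTcomul K U V z) := by
  rw [hLp.symm, hLp.split]
  have he : TensorProduct.lift ((LinearMap.mul K K).compl₁₂ (Lp.flip x) (Lp.flip y))
      = TensorProduct.lift ((LinearMap.mul K K).compl₁₂ (Lp x) (Lp y)) := by
    apply TensorProduct.ext'
    intro p q
    simp only [TensorProduct.lift.tmul, LinearMap.compl₁₂_apply, LinearMap.mul_apply',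
      LinearMap.flip_apply]
    rw [hLp.symm p x, hLp.symm q y]
  rw [he]

variable (K U V Lp)

def QQ : (JT K U V ⊗[K] (JT K U V ⊗[K] JT K U V)) ⊗[K]
      (JT K U V ⊗[K] (JT K U V ⊗[K] JT K U V)) →ₗ[K] JT K U V ⊗[K] JT K U V :=
  (TensorProduct.lid K (JT K U V ⊗[K] JT K U V)).toLinearMap ∘ₗ
    TensorProduct.map (TensorProduct.lift Lp)
      (TensorProduct.lift (LinearMap.mul K (JT K U V ⊗[K] JT K U V))) ∘ₗ
    (TensorProduct.tensorTensorTensorComm K (JT K U V) (JT K U V ⊗[K] JT K U V)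
      (JT K U V) (JT K U V ⊗[K] JT K U V)).toLinearMap

theorem QQ_tmul (x₁ y₁ : JT K U V) (X Y : JT K U V ⊗[K] JT K U V) :
    QQ K U V Lp ((x₁ ⊗ₜ X) ⊗ₜ (y₁ ⊗ₜ Y)) = Lp x₁ y₁ • (X * Y) := by
  simp [QQ]

def pairing4 : (JT K U V ⊗[K] JT K U V) ⊗[K] (JT K U V ⊗[K] JT K U V) →ₗ[K] K :=
  LinearMap.mul' K K ∘ₗ
    TensorProduct.map (TensorProduct.lift Lp) (TensorProduct.lift Lp) ∘ₗ
    (TensorProduct.tensorTensorTensorComm K (JT K U V) (JT K U V)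
      (JT K U V) (JT K U V)).toLinearMap

theorem pairing4_tmul (a b c d : JT K U V) :
    pairing4 K U V Lp ((a ⊗ₜ b) ⊗ₜ (c ⊗ₜ d)) = Lp a c * Lp b d := by
  simp [pairing4]

def mulRL : (JT K U V ⊗[K] JT K U V) ⊗[K] JT K U V →ₗ[K] JT K U V :=
  TensorProduct.lift (LinearMap.mul K (JT K U V)) ∘ₗ
    TensorProduct.map (TensorProduct.lift (LinearMap.mul K (JT K U V))) LinearMap.id

theorem mulRL_tmul (a b c : JT K U V) :
    mulRL K U V ((a ⊗ₜ b) ⊗ₜ c) = (a * b) * c := by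
  simp [mulRL]

def mulRR : JT K U V ⊗[K] (JT K U V ⊗[K] JT K U V) →ₗ[K] JT K U V :=
  TensorProduct.lift (LinearMap.mul K (JT K U V)) ∘ₗ
    TensorProduct.map LinearMap.id (TensorProduct.lift (LinearMap.mul K (JT K U V)))

theorem mulRR_tmul (a b c : JT K U V) :
    mulRR K U V (a ⊗ₜ (b ⊗ₜ c)) = a * (b * c) := by
  simp [mulRR]

def QQ2 : (JT K U V ⊗[K] (JT K U V ⊗[K] JT K U V)) ⊗[K]
      (JT K U V ⊗[K] (JT K U V ⊗[K] JT K U V)) →ₗ[K]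
      (JT K U V ⊗[K] JT K U V) ⊗[K] (JT K U V ⊗[K] JT K U V) :=
  (TensorProduct.lid K ((JT K U V ⊗[K] JT K U V) ⊗[K] (JT K U V ⊗[K] JT K U V))).toLinearMap ∘ₗ
    TensorProduct.map (TensorProduct.lift Lp) LinearMap.id ∘ₗ
    (TensorProduct.tensorTensorTensorComm K (JT K U V) (JT K U V ⊗[K] JT K U V)
      (JT K U V) (JT K U V ⊗[K] JT K U V)).toLinearMap

theorem QQ2_tmul (x₁ y₁ : JT K U V) (X Y : JT K U V ⊗[K] JT K U V) :
    QQ2 K U V Lp ((x₁ ⊗ₜ X) ⊗ₜ (y₁ ⊗ₜ Y)) = Lp x₁ y₁ • (X ⊗ₜ Y) := by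
  simp [QQ2]

def Psi : (JT K U V ⊗[K] (JT K U V ⊗[K] JT K U V)) ⊗[K]
      ((JT K U V ⊗[K] (JT K U V ⊗[K] JT K U V)) ⊗[K]
        ((JT K U V ⊗[K] JT K U V) ⊗[K] JT K U V)) →ₗ[K] JT K U V :=
  (TensorProduct.lid K (JT K U V)).toLinearMap ∘ₗ
    TensorProduct.map (pairing4 K U V Lp) (mulRL K U V) ∘ₗ
    (TensorProduct.tensorTensorTensorComm K (JT K U V ⊗[K] JT K U V) (JT K U V ⊗[K] JT K U V)
      (JT K U V ⊗[K] JT K U V) (JT K U V)).toLinearMap ∘ₗ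
    TensorProduct.map ((TensorProduct.tensorTensorTensorComm K (JT K U V) (JT K U V)
      (JT K U V) (JT K U V)).toLinearMap ∘ₗ QQ2 K U V Lp) LinearMap.id ∘ₗ
    (TensorProduct.assoc K (JT K U V ⊗[K] (JT K U V ⊗[K] JT K U V))
      (JT K U V ⊗[K] (JT K U V ⊗[K] JT K U V))
      ((JT K U V ⊗[K] JT K U V) ⊗[K] JT K U V)).symm.toLinearMap

theorem Psi_tmul (a₁ a₂ a₃ b₁ b₂ b₃ c₁ c₂ c₃ : JT K U V) :
    Psi K U V Lp ((a₁ ⊗ₜ (a₂ ⊗ₜ a₃)) ⊗ₜ ((b₁ ⊗ₜ (b₂ ⊗ₜ b₃)) ⊗ₜ ((c₁ ⊗ₜ c₂) ⊗ₜ c₃)))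
      = Lp a₁ b₁ • ((Lp a₂ c₁ * Lp b₂ c₂) • ((a₃ * b₃) * c₃)) := by
  simp [Psi, QQ2_tmul, pairing4_tmul, mulRL_tmul, smul_tmul', smul_smul, mul_assoc]

def Psi' : ((JT K U V ⊗[K] JT K U V) ⊗[K] JT K U V) ⊗[K]
      ((JT K U V ⊗[K] (JT K U V ⊗[K] JT K U V)) ⊗[K]
        (JT K U V ⊗[K] (JT K U V ⊗[K] JT K U V))) →ₗ[K] JT K U V :=
  (TensorProduct.lid K (JT K U V)).toLinearMap ∘ₗ
    TensorProduct.map (pairing4 K U V Lp) (mulRR K U V) ∘ₗ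
    (TensorProduct.tensorTensorTensorComm K (JT K U V ⊗[K] JT K U V) (JT K U V)
      (JT K U V ⊗[K] JT K U V) (JT K U V ⊗[K] JT K U V)).toLinearMap ∘ₗ
    TensorProduct.map LinearMap.id ((TensorProduct.tensorTensorTensorComm K (JT K U V) (JT K U V)
      (JT K U V) (JT K U V)).toLinearMap ∘ₗ QQ2 K U V Lp)

theorem Psi'_tmul (a₁ a₂ a₃ b₁ b₂ b₃ c₁ c₂ c₃ : JT K U V) :
    Psi' K U V Lp (((a₁ ⊗ₜ a₂) ⊗ₜ a₃) ⊗ₜ ((b₁ ⊗ₜ (b₂ ⊗ₜ b₃)) ⊗ₜ (c₁ ⊗ₜ (c₂ ⊗ₜ c₃))))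
      = Lp b₁ c₁ • ((Lp a₁ b₂ * Lp a₂ c₂) • (a₃ * (b₃ * c₃))) := by
  simp [Psi', QQ2_tmul, pairing4_tmul, mulRR_tmul, smul_tmul', tmul_smul, smul_smul, mul_assoc]

variable {K U V Lp}

theorem Delta_sqAux (X Y : JT K U V ⊗[K] JT K U V) :
    JTcomul K U V (sqAux K U V Lp (X ⊗ₜ Y))
      = QQ K U V Lp ((TensorProduct.map LinearMap.id (JTcomul K U V) X)
          ⊗ₜ (TensorProduct.map LinearMap.id (JTcomul K U V) Y)) := by
  induction X with
  | zero => simp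
  | add x x' hx hx' => simp only [add_tmul, map_add, hx, hx']
  | tmul x₁ x₂ =>
    induction Y with
    | zero => simp
    | add y y' hy hy' => simp only [tmul_add, map_add, hy, hy']
    | tmul y₁ y₂ =>
      rw [sqAux_tmul]
      simp only [TensorProduct.map_tmul, LinearMap.id_coe, id_eq, map_smul, JTcomul_mul,
        QQ_tmul]

theorem stepB (hLp : IsLaplacePairing K U V B Lp)
    (A B2 : JT K U V ⊗[K] (JT K U V ⊗[K] JT K U V)) (C : JT K U V ⊗[K] JT K U V) :
    sqAux K U V Lp (QQ K U V Lp (A ⊗ₜ B2) ⊗ₜ C)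
      = Psi K U V Lp (A ⊗ₜ (B2 ⊗ₜ (TensorProduct.map (JTcomul K U V) LinearMap.id C))) := by
  induction A with
  | zero => simp
  | add x x' hx hx' => simp only [add_tmul, map_add, hx, hx']
  | tmul a₁ A₂ =>
    induction A₂ with
    | zero => simp
    | add x x' hx hx' => simp only [tmul_add, add_tmul, map_add, hx, hx']
    | tmul a₂ a₃ =>
      induction B2 with
      | zero => simp
      | add x x' hx hx' => simp only [tmul_add, add_tmul, map_add, hx, hx']
      | tmul b₁ B₂ =>
        induction B₂ with
        | zero => simp
        | add x x' hx hx' => simp only [tmul_add, add_tmul, map_add, hx, hx']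
        | tmul b₂ b₃ =>
          induction C with
          | zero => simp
          | add x x' hx hx' => simp only [tmul_add, add_tmul, map_add, hx, hx']
          | tmul c₁ c₂ =>
            rw [QQ_tmul, Algebra.TensorProduct.tmul_mul_tmul, ← smul_tmul', map_smul,
              sqAux_tmul, Lp_mul_left hLp]
            simp only [TensorProduct.map_tmul, LinearMap.id_coe, id_eq]
            generalize JTcomul K U V c₁ = W
            induction W with
            | zero => simp
            | add w w' hw hw' =>
              simp only [map_add, add_smul, smul_add, add_tmul, tmul_add, hw, hw']
            | tmul w₁ w₂ =>
              rw [Psi_tmul]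
              simp only [TensorProduct.lift.tmul, LinearMap.compl₁₂_apply,
                LinearMap.mul_apply']

theorem stepC (hLp : IsLaplacePairing K U V B Lp)
    (D : JT K U V ⊗[K] JT K U V) (B2 C2 : JT K U V ⊗[K] (JT K U V ⊗[K] JT K U V)) :
    sqAux K U V Lp (D ⊗ₜ QQ K U V Lp (B2 ⊗ₜ C2))
      = Psi' K U V Lp ((TensorProduct.map (JTcomul K U V) LinearMap.id D) ⊗ₜ (B2 ⊗ₜ C2)) := by
  induction D with
  | zero => simp
  | add x x' hx hx' => simp only [add_tmul, map_add, hx, hx']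
  | tmul d₁ d₂ =>
    induction B2 with
    | zero => simp
    | add x x' hx hx' => simp only [tmul_add, add_tmul, map_add, hx, hx']
    | tmul b₁ B₂ =>
      induction B₂ with
      | zero => simp
      | add x x' hx hx' => simp only [tmul_add, add_tmul, map_add, hx, hx']
      | tmul b₂ b₃ =>
        induction C2 with
        | zero => simp
        | add x x' hx hx' => simp only [tmul_add, add_tmul, map_add, hx, hx']
        | tmul c₁ C₂ =>
          induction C₂ with
          | zero => simp
          | add x x' hx hx' => simp only [tmul_add, add_tmul, map_add, hx, hx']
          | tmul c₂ c₃ =>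
            rw [QQ_tmul, Algebra.TensorProduct.tmul_mul_tmul, tmul_smul, map_smul,
              sqAux_tmul, hLp.split d₁]
            simp only [TensorProduct.map_tmul, LinearMap.id_coe, id_eq]
            generalize JTcomul K U V d₁ = W
            induction W with
            | zero => simp
            | add w w' hw hw' =>
              simp only [map_add, add_smul, smul_add, add_tmul, tmul_add, hw, hw']
            | tmul w₁ w₂ =>
              rw [Psi'_tmul]
              simp only [TensorProduct.lift.tmul, LinearMap.compl₁₂_apply,
                LinearMap.mul_apply', LinearMap.flip_apply]

theorem swap12 (X : JT K U V ⊗[K] JT K U V) :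
    TensorProduct.map (TensorProduct.comm K (JT K U V) (JT K U V)).toLinearMap LinearMap.id
      (TensorProduct.map (JTcomul K U V) LinearMap.id X)
    = TensorProduct.map (JTcomul K U V) LinearMap.id X := by
  induction X with
  | zero => simp
  | add x x' hx hx' => simp only [map_add, hx, hx']
  | tmul x₁ x₂ => simp [JTcomul_cocomm]

theorem stepD (A B2 C2 : (JT K U V ⊗[K] JT K U V) ⊗[K] JT K U V) :
    Psi K U V Lp ((TensorProduct.assoc K _ _ _ A) ⊗ₜ
      ((TensorProduct.assoc K _ _ _
          (TensorProduct.map (TensorProduct.comm K (JT K U V) (JT K U V)).toLinearMap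
            LinearMap.id B2)) ⊗ₜ
        (TensorProduct.map (TensorProduct.comm K (JT K U V) (JT K U V)).toLinearMap
          LinearMap.id C2)))
    = Psi' K U V Lp (A ⊗ₜ ((TensorProduct.assoc K _ _ _ B2) ⊗ₜ
        (TensorProduct.assoc K _ _ _ C2))) := by
  induction A with
  | zero => simp
  | add x x' hx hx' => simp only [map_add, add_tmul, tmul_add, hx, hx']
  | tmul A₁ a₃ =>
    induction A₁ with
    | zero => simp [zero_tmul]
    | add x x' hx hx' => simp only [map_add, add_tmul, tmul_add, hx, hx']
    | tmul a₁ a₂ =>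
      induction B2 with
      | zero => simp
      | add x x' hx hx' => simp only [map_add, add_tmul, tmul_add, hx, hx']
      | tmul B₁ b₃ =>
        induction B₁ with
        | zero => simp [zero_tmul]
        | add x x' hx hx' => simp only [map_add, add_tmul, tmul_add, hx, hx']
        | tmul b₁ b₂ =>
          induction C2 with
          | zero => simp
          | add x x' hx hx' => simp only [map_add, add_tmul, tmul_add, hx, hx']
          | tmul C₁ c₃ =>
            induction C₁ with
            | zero => simp [zero_tmul]
            | add x x' hx hx' => simp only [map_add, add_tmul, tmul_add, hx, hx']
            | tmul c₁ c₂ =>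
              simp only [TensorProduct.map_tmul, TensorProduct.comm_tmul,
                TensorProduct.assoc_tmul, LinearMap.id_coe, id_eq,
                LinearEquiv.coe_coe]
              rw [Psi_tmul, Psi'_tmul, smul_smul, smul_smul, mul_assoc a₃]
              congr 1
              ring

theorem sq_assoc (hLp : IsLaplacePairing K U V B Lp) (a b c : JT K U V) :
    sqProd K U V Lp (sqProd K U V Lp a b) c
      = sqProd K U V Lp a (sqProd K U V Lp b c) := by
  simp only [sqProd_eq]
  simp only [Delta_sqAux]
  rw [stepB hLp, stepC hLp]
  simp only [JTcomul_coassoc]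
  conv_lhs => rw [← swap12 (JTcomul K U V b), ← swap12 (JTcomul K U V c)]
  exact stepD _ _ _

theorem sq_one_left (hLp : IsLaplacePairing K U V B Lp) (a : JT K U V) :
    sqProd K U V Lp 1 a = a := by
  rw [sqProd_eq, JTcomul_one]
  have key : ∀ X : JT K U V ⊗[K] JT K U V,
      sqAux K U V Lp (((1 : JT K U V) ⊗ₜ (1 : JT K U V)) ⊗ₜ X)
        = TensorProduct.lid K _ (TensorProduct.map (JTcounit K U V).toLinearMap LinearMap.id X) := by
    intro X
    induction X with
    | zero => simp
    | add x x' hx hx' => simp only [tmul_add, map_add, hx, hx']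
    | tmul x₁ x₂ => rw [sqAux_tmul, Lp_one_counit hLp]; simp
  rw [key, JTcomul_counit]

theorem sq_one_right (hLp : IsLaplacePairing K U V B Lp) (a : JT K U V) :
    sqProd K U V Lp a 1 = a := by
  rw [sqProd_eq, JTcomul_one]
  have key : ∀ X : JT K U V ⊗[K] JT K U V,
      sqAux K U V Lp (X ⊗ₜ ((1 : JT K U V) ⊗ₜ (1 : JT K U V)))
        = TensorProduct.lid K _ (TensorProduct.map (JTcounit K U V).toLinearMap LinearMap.id X) := by
    intro X
    induction X with
    | zero => simp
    | add x x' hx hx' => simp only [add_tmul, map_add, hx, hx']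
    | tmul x₁ x₂ => rw [sqAux_tmul, hLp.symm x₁ 1, Lp_one_counit hLp]; simp
  rw [key, JTcomul_counit]

theorem statement6' (hLp : IsLaplacePairing K U V B Lp) :
    (∀ a b c : JT K U V,
      sqProd K U V Lp (sqProd K U V Lp a b) c = sqProd K U V Lp a (sqProd K U V Lp b c)) ∧
    (∀ a : JT K U V, sqProd K U V Lp 1 a = a) ∧
    (∀ a : JT K U V, sqProd K U V Lp a 1 = a) :=
  ⟨sq_assoc hLp, sq_one_left hLp, sq_one_right hLp⟩

variable (K U V B)

theorem statement6 (Lp : JT K U V →ₗ[K] JT K U V →ₗ[K] K)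
    (hLp : IsLaplacePairing K U V B Lp) :
    (∀ a b c : JT K U V,
      sqProd K U V Lp (sqProd K U V Lp a b) c = sqProd K U V Lp a (sqProd K U V Lp b c)) ∧
    (∀ a : JT K U V, sqProd K U V Lp 1 a = a) ∧
    (∀ a : JT K U V, sqProd K U V Lp a 1 = a) :=
  statement6' hLp

end
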